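/- Fix an integer n ≥ 1, masses m₁, m₂ > 0, exponents γ₁, γ₂ with 1 < γ_i ≤ 2, and constants 0 < λ ≤ Λ. There exists a constant C, depending only on λ, Λ, m₁, m₂, γ₁, γ₂, such that for all n₁, n₂ ∈ [λ, Λ] and all ν₁, ν₂ ≥ 0 with ρ_V := m₁ν₁ + m₂ν₂ > 0, setting ρ_U := m₁n₁ + m₂n₂, one has ( n₁/ρ_U − ν₁/ρ_V )² · ρ_V ≤ C ( s₁(ν₁|n₁) + s₂(ν₂|n₂) ), and symmetrically ( n₂/ρ_U − ν₂/ρ_V )² · ρ_V ≤ C ( s₁(ν₁|n₁) + s₂(ν₂|n₂) ). -/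

import Mathlib

/-- The isentropic internal-energy function `s(x) = m^{n(γ−1)/2} x^γ/(γ−1)`. -/
noncomputable def sFn (n : ℕ) (m γ : ℝ) (x : ℝ) : ℝ :=
  m ^ ((n : ℝ) * (γ - 1) / 2) * x ^ γ / (γ - 1)

/-- Its derivative `s′(x) = γ m^{n(γ−1)/2} x^{γ−1}/(γ−1)`. -/
noncomputable def sFn' (n : ℕ) (m γ : ℝ) (x : ℝ) : ℝ :=
  γ * m ^ ((n : ℝ) * (γ - 1) / 2) * x ^ (γ - 1) / (γ - 1)

/-- The relative quantity `s(y|x) = s(y) − s(x) − s′(x)(y − x)`. -/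
noncomputable def sRel (n : ℕ) (m γ : ℝ) (y x : ℝ) : ℝ :=
  sFn n m γ y - sFn n m γ x - sFn' n m γ x * (y - x)

open Real Set

/-- Increment bound for `t ↦ t^β` with `0 < β ≤ 1` on `[0,M]`. -/
lemma rpow_increment (β M x y : ℝ) (hβ : 0 < β) (hβ1 : β ≤ 1)
    (hx : 0 ≤ x) (hxy : x ≤ y) (hyM : y ≤ M) :
    β * M ^ (β - 1) * (y - x) ≤ y ^ β - x ^ β := by
  rcases hxy.eq_or_lt with rfl | hlt
  · simp
  have hM : 0 < M := lt_of_le_of_lt hx (lt_of_lt_of_le hlt hyM)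
  have hmono : MonotoneOn (fun t : ℝ => t ^ β - β * M ^ (β - 1) * t) (Icc 0 M) := by
    apply monotoneOn_of_deriv_nonneg (convex_Icc 0 M)
    · apply ContinuousOn.sub
      · exact fun t _ => (Real.continuousAt_rpow_const t β (Or.inr hβ.le)).continuousWithinAt
      · fun_prop
    · rw [interior_Icc]
      intro t ht
      exact ((Real.hasDerivAt_rpow_const (Or.inl ht.1.ne')).sub
        ((hasDerivAt_id t).const_mul (β * M ^ (β - 1)))).differentiableAt.differentiableWithinAt
    · rw [interior_Icc]
      intro t ht
      have hd : HasDerivAt (fun t : ℝ => t ^ β - β * M ^ (β - 1) * t)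
          (β * t ^ (β - 1) - β * M ^ (β - 1) * 1) t :=
        (Real.hasDerivAt_rpow_const (Or.inl ht.1.ne')).sub
          ((hasDerivAt_id t).const_mul (β * M ^ (β - 1)))
      rw [hd.deriv]
      have hle : M ^ (β - 1) ≤ t ^ (β - 1) :=
        Real.rpow_le_rpow_of_nonpos ht.1 ht.2.le (by linarith)
      nlinarith
  have h1 := hmono (Set.mem_Icc.2 ⟨hx, le_trans hxy hyM⟩)
    (Set.mem_Icc.2 ⟨le_trans hx hxy, hyM⟩) hxy
  simp only at h1
  linarith

/-- Strong-convexity type bound for `t ↦ t^(1+β)` on `[0,M]`. -/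
lemma rpow_quadratic (β M x y : ℝ) (hβ : 0 < β) (hβ1 : β ≤ 1) (hM : 0 < M)
    (hx : 0 ≤ x) (hxM : x ≤ M) (hy : 0 ≤ y) (hyM : y ≤ M) :
    x ^ (1 + β) + (1 + β) * x ^ β * (y - x)
      + (β * (1 + β) / 2) * M ^ (β - 1) * (y - x) ^ 2 ≤ y ^ (1 + β) := by
  set c : ℝ := β * (1 + β) / 2 * M ^ (β - 1) with hc
  set h : ℝ → ℝ := fun t => t ^ (1 + β) - (1 + β) * x ^ β * t - c * (t - x) ^ 2 with hh
  have hd : ∀ t : ℝ, HasDerivAt h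
      ((1 + β) * t ^ β - (1 + β) * x ^ β * 1 - c * (2 * (t - x) ^ 1 * 1)) t := by
    intro t
    have h1 : HasDerivAt (fun t : ℝ => t ^ (1 + β)) ((1 + β) * t ^ (1 + β - 1)) t :=
      Real.hasDerivAt_rpow_const (Or.inr (by linarith))
    rw [show (1 : ℝ) + β - 1 = β by ring] at h1
    exact (h1.sub ((hasDerivAt_id t).const_mul ((1 + β) * x ^ β))).sub
      ((((hasDerivAt_id t).sub_const x).pow 2).const_mul c)
  have hxy : h x ≤ h y := by
    rcases le_total x y with hxy | hyx
    · have hmono : MonotoneOn h (Icc x M) := by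
        apply monotoneOn_of_deriv_nonneg (convex_Icc x M)
        · exact fun t _ => (hd t).continuousAt.continuousWithinAt
        · exact fun t _ => (hd t).differentiableAt.differentiableWithinAt
        · rw [interior_Icc]
          intro t ht
          rw [(hd t).deriv]
          have key := rpow_increment β M x t hβ hβ1 hx ht.1.le ht.2.le
          rw [hc]
          nlinarith
      exact hmono (Set.mem_Icc.2 ⟨le_refl x, hxM⟩) (Set.mem_Icc.2 ⟨hxy, hyM⟩) hxy
    · have hanti : AntitoneOn h (Icc 0 x) := by
        apply antitoneOn_of_deriv_nonpos (convex_Icc 0 x)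
        · exact fun t _ => (hd t).continuousAt.continuousWithinAt
        · exact fun t _ => (hd t).differentiableAt.differentiableWithinAt
        · rw [interior_Icc]
          intro t ht
          rw [(hd t).deriv]
          have key := rpow_increment β M t x hβ hβ1 ht.1.le ht.2.le hxM
          rw [hc]
          nlinarith
      exact hanti (Set.mem_Icc.2 ⟨hy, hyx⟩) (Set.mem_Icc.2 ⟨hx, le_refl x⟩) hyx
  simp only [hh] at hxy
  nlinarith [hxy]

lemma sRel_eq (n : ℕ) (m γ y x : ℝ) (hγ : 1 < γ) :
    sRel n m γ y x = (m ^ ((n : ℝ) * (γ - 1) / 2) * y ^ γ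
      - m ^ ((n : ℝ) * (γ - 1) / 2) * x ^ γ
      - γ * m ^ ((n : ℝ) * (γ - 1) / 2) * x ^ (γ - 1) * (y - x)) / (γ - 1) := by
  simp only [sRel, sFn, sFn']
  field_simp

lemma sRel_quadratic (n : ℕ) (m γ M x ν : ℝ) (hm : 0 < m) (hγ : 1 < γ) (hγ' : γ ≤ 2)
    (hM : 0 < M) (hx : 0 ≤ x) (hxM : x ≤ M) (hν : 0 ≤ ν) (hνM : ν ≤ M) :
    m ^ ((n : ℝ) * (γ - 1) / 2) * γ / 2 * M ^ (γ - 2) * (ν - x) ^ 2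
      ≤ sRel n m γ ν x := by
  have ha : (0:ℝ) < m ^ ((n : ℝ) * (γ - 1) / 2) := Real.rpow_pos_of_pos hm _
  set a := m ^ ((n : ℝ) * (γ - 1) / 2) with hadef
  have key := rpow_quadratic (γ - 1) M x ν (by linarith) (by linarith) hM hx hxM hν hνM
  rw [show (1 : ℝ) + (γ - 1) = γ by ring] at key
  rw [show γ - 1 - 1 = γ - 2 by ring] at key
  rw [sRel_eq n m γ ν x hγ, ← hadef, le_div_iff₀ (by linarith : (0:ℝ) < γ - 1)]
  nlinarith [mul_le_mul_of_nonneg_left key ha.le]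

lemma sRel_linear (n : ℕ) (m γ ub : ℝ) (hm : 0 < m) (hγ : 1 < γ) (hγ' : γ ≤ 2)
    (hub : 0 < ub) :
    ∃ M : ℝ, 1 ≤ M ∧ ub ≤ M ∧
      ∀ x, 0 ≤ x → x ≤ ub → ∀ ν, M ≤ ν → ν ≤ sRel n m γ ν x := by
  have ha : (0:ℝ) < m ^ ((n : ℝ) * (γ - 1) / 2) := Real.rpow_pos_of_pos hm _
  set a := m ^ ((n : ℝ) * (γ - 1) / 2) with hadef
  set β : ℝ := γ - 1 with hβdef
  have hβ : 0 < β := by simp only [hβdef]; linarith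
  have hβ1 : β ≤ 1 := by simp only [hβdef]; linarith
  have hubβ : (0:ℝ) < ub ^ β := Real.rpow_pos_of_pos hub β
  have hubγ : (0:ℝ) < ub ^ γ := Real.rpow_pos_of_pos hub γ
  set K : ℝ := γ * a / β * ub ^ β + 1 + a / β * ub ^ γ with hKdef
  have hK : 0 < K := by
    have h1 : 0 < γ * a / β * ub ^ β :=
      mul_pos (div_pos (mul_pos (by linarith) ha) hβ) hubβ
    have h2 : 0 < a / β * ub ^ γ := mul_pos (div_pos ha hβ) hubγ
    simp only [hKdef]; linarith
  have h0 : 0 ≤ β * K / a := le_of_lt (div_pos (mul_pos hβ hK) ha)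
  refine ⟨max (max 1 ub) ((β * K / a) ^ β⁻¹), le_trans (le_max_left 1 ub) (le_max_left _ _),
    le_trans (le_max_right 1 ub) (le_max_left _ _), ?_⟩
  set M : ℝ := max (max 1 ub) ((β * K / a) ^ β⁻¹) with hMdef
  have hM1 : (1:ℝ) ≤ M := le_trans (le_max_left 1 ub) (le_max_left _ _)
  have hMβ : β * K / a ≤ M ^ β := by
    calc β * K / a = ((β * K / a) ^ β⁻¹) ^ β := (Real.rpow_inv_rpow h0 hβ.ne').symm
      _ ≤ M ^ β := Real.rpow_le_rpow (Real.rpow_nonneg h0 _) (le_max_right _ _) hβ.le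
  intro x hx0 hxub ν hMν
  have hν1 : (1:ℝ) ≤ ν := le_trans hM1 hMν
  have hνpos : (0:ℝ) < ν := by linarith
  rw [sRel_eq n m γ ν x hγ, ← hadef, le_div_iff₀ (by simp only [hβdef] at hβ; linarith : (0:ℝ) < γ - 1)]
  have f1 : a * ν ^ γ = a * ν ^ β * ν := by
    rw [show γ = β + 1 by simp only [hβdef]; ring, Real.rpow_add hνpos, Real.rpow_one]
    ring
  have f2 : M ^ β ≤ ν ^ β :=
    Real.rpow_le_rpow (by linarith) hMν hβ.le
  have f4 : β * K * ν ≤ a * ν ^ β * ν := by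
    have h5 : β * K ≤ a * ν ^ β := by
      have := mul_le_mul_of_nonneg_left (le_trans hMβ f2) ha.le
      rwa [show a * (β * K / a) = β * K by field_simp] at this
    exact mul_le_mul_of_nonneg_right h5 hνpos.le
  have f5 : a * x ^ γ ≤ a * ub ^ γ :=
    mul_le_mul_of_nonneg_left (Real.rpow_le_rpow hx0 hxub (by linarith)) ha.le
  have f6 : x ^ β ≤ ub ^ β := Real.rpow_le_rpow hx0 hxub hβ.le
  have f7 : γ * a * x ^ β * ν ≤ γ * a * ub ^ β * ν :=
    mul_le_mul_of_nonneg_right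
      (mul_le_mul_of_nonneg_left f6 (mul_nonneg (by linarith) ha.le)) hνpos.le
  have f8 : 0 ≤ γ * a * x ^ β * x :=
    mul_nonneg (mul_nonneg (mul_nonneg (by linarith) ha.le) (Real.rpow_nonneg hx0 β)) hx0
  have f9 : a * ub ^ γ * 1 ≤ a * ub ^ γ * ν :=
    mul_le_mul_of_nonneg_left hν1 (mul_nonneg ha.le hubγ.le)
  have eKν : β * K * ν = γ * a * ub ^ β * ν + β * ν + a * ub ^ γ * ν := by
    have eK : β * K = γ * a * ub ^ β + β + a * ub ^ γ := by
      simp only [hKdef]; field_simp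
    rw [eK]; ring
  have hgoal : ν * β ≤ a * ν ^ γ - a * x ^ γ - γ * a * x ^ β * (ν - x) := by
    nlinarith [f1, f4, f5, f7, f8, f9, eKν]
  simp only [hβdef] at hgoal
  try linarith [hgoal]

set_option maxHeartbeats 2000000 in
/-- For `n ≥ 1`, masses `m₁, m₂ > 0`, exponents `1 < γᵢ ≤ 2` and
`0 < λ ≤ Λ`, there is `C` (depending only on these data) such that for all
`n₁, n₂ ∈ [λ, Λ]` and `ν₁, ν₂ ≥ 0` with `ρ_V = m₁ν₁ + m₂ν₂ > 0`, both
`(n₁/ρ_U − ν₁/ρ_V)² ρ_V ≤ C (s₁(ν₁|n₁) + s₂(ν₂|n₂))` and the symmetric bound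
hold, where `ρ_U = m₁n₁ + m₂n₂`. -/
theorem density_fraction_difference_le_relative_pressure (n : ℕ) (hn : 1 ≤ n)
    (m₁ m₂ γ₁ γ₂ lb ub : ℝ) (hm₁ : 0 < m₁) (hm₂ : 0 < m₂)
    (hγ₁ : 1 < γ₁) (hγ₁' : γ₁ ≤ 2) (hγ₂ : 1 < γ₂) (hγ₂' : γ₂ ≤ 2)
    (hlb : 0 < lb) (hlu : lb ≤ ub) :
    ∃ C : ℝ, 0 < C ∧
      ∀ n₁ n₂ ν₁ ν₂ : ℝ, lb ≤ n₁ → n₁ ≤ ub → lb ≤ n₂ → n₂ ≤ ub →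
        0 ≤ ν₁ → 0 ≤ ν₂ → 0 < m₁ * ν₁ + m₂ * ν₂ →
        (n₁ / (m₁ * n₁ + m₂ * n₂) - ν₁ / (m₁ * ν₁ + m₂ * ν₂)) ^ 2 *
            (m₁ * ν₁ + m₂ * ν₂) ≤
          C * (sRel n m₁ γ₁ ν₁ n₁ + sRel n m₂ γ₂ ν₂ n₂) ∧
        (n₂ / (m₁ * n₁ + m₂ * n₂) - ν₂ / (m₁ * ν₁ + m₂ * ν₂)) ^ 2 *
            (m₁ * ν₁ + m₂ * ν₂) ≤
          C * (sRel n m₁ γ₁ ν₁ n₁ + sRel n m₂ γ₂ ν₂ n₂) := by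
  have hub : 0 < ub := lt_of_lt_of_le hlb hlu
  obtain ⟨M₁, hM₁1, hM₁ub, hM₁⟩ := sRel_linear n m₁ γ₁ ub hm₁ hγ₁ hγ₁' hub
  obtain ⟨M₂, hM₂1, hM₂ub, hM₂⟩ := sRel_linear n m₂ γ₂ ub hm₂ hγ₂ hγ₂' hub
  set M : ℝ := max M₁ M₂ with hMdef
  have hM1 : (1:ℝ) ≤ M := le_trans hM₁1 (le_max_left _ _)
  have hMub : ub ≤ M := le_trans hM₁ub (le_max_left _ _)
  have hMpos : (0:ℝ) < M := by linarith
  set c₁ : ℝ := m₁ ^ ((n : ℝ) * (γ₁ - 1) / 2) * γ₁ / 2 * M ^ (γ₁ - 2) with hc₁def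
  set c₂ : ℝ := m₂ ^ ((n : ℝ) * (γ₂ - 1) / 2) * γ₂ / 2 * M ^ (γ₂ - 2) with hc₂def
  have hc₁ : 0 < c₁ :=
    mul_pos (div_pos (mul_pos (Real.rpow_pos_of_pos hm₁ _) (by linarith)) two_pos)
      (Real.rpow_pos_of_pos hMpos _)
  have hc₂ : 0 < c₂ :=
    mul_pos (div_pos (mul_pos (Real.rpow_pos_of_pos hm₂ _) (by linarith)) two_pos)
      (Real.rpow_pos_of_pos hMpos _)
  set c : ℝ := min c₁ c₂ with hcdef
  have hc : 0 < c := lt_min hc₁ hc₂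
  set mmin : ℝ := min m₁ m₂ with hmmindef
  set mmax : ℝ := max m₁ m₂ with hmmaxdef
  have hmmin : 0 < mmin := lt_min hm₁ hm₂
  have hmmax : 0 < mmax := lt_of_lt_of_le hm₁ (le_max_left _ _)
  set δ : ℝ := mmin * lb / 2 with hδdef
  have hδ : 0 < δ := div_pos (mul_pos hmmin hlb) two_pos
  set ρl : ℝ := (m₁ + m₂) * lb with hρldef
  have hρl : 0 < ρl := mul_pos (by linarith) hlb
  have hub2 : (0:ℝ) < ub ^ 2 := pow_pos hub 2
  set T1 : ℝ := 2 * ub ^ 2 / (c * δ) with hT1def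
  set T2 : ℝ := 4 * ub ^ 2 / (mmin * c * lb) with hT2def
  set T3 : ℝ := ub ^ 2 * (M + 1) / mmin with hT3def
  have hT1 : 0 < T1 := div_pos (by linarith) (mul_pos hc hδ)
  have hT2 : 0 < T2 := div_pos (by linarith) (mul_pos (mul_pos hmmin hc) hlb)
  have hT3 : 0 < T3 := div_pos (mul_pos hub2 (by linarith)) hmmin
  set C' : ℝ := T1 + T2 + T3 with hC'def
  have hC' : 0 < C' := by linarith
  refine ⟨mmax ^ 2 * C' / ρl ^ 2,
    div_pos (mul_pos (pow_pos hmmax 2) hC') (pow_pos hρl 2), ?_⟩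
  intro n₁ n₂ ν₁ ν₂ hn₁l hn₁u hn₂l hn₂u hν₁ hν₂ hV
  set U : ℝ := m₁ * n₁ + m₂ * n₂ with hUdef
  set V : ℝ := m₁ * ν₁ + m₂ * ν₂ with hVdef
  set A : ℝ := n₁ * ν₂ - n₂ * ν₁ with hAdef
  set R₁ : ℝ := sRel n m₁ γ₁ ν₁ n₁ with hR₁def
  set R₂ : ℝ := sRel n m₂ γ₂ ν₂ n₂ with hR₂def
  set S : ℝ := R₁ + R₂ with hSdef
  have hU : 0 < U := by
    have h1 := mul_pos hm₁ (lt_of_lt_of_le hlb hn₁l)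
    have h2 := mul_pos hm₂ (lt_of_lt_of_le hlb hn₂l)
    simp only [hUdef]; linarith only [h1, h2]
  have hUl : ρl ≤ U := by
    have h1 := mul_le_mul_of_nonneg_left hn₁l hm₁.le
    have h2 := mul_le_mul_of_nonneg_left hn₂l hm₂.le
    simp only [hρldef, hUdef]; linarith only [h1, h2]
  have hq₁ : ν₁ ≤ M → c₁ * (ν₁ - n₁) ^ 2 ≤ R₁ := fun h =>
    sRel_quadratic n m₁ γ₁ M n₁ ν₁ hm₁ hγ₁ hγ₁' hMpos (by linarith) (by linarith) hν₁ h
  have hq₂ : ν₂ ≤ M → c₂ * (ν₂ - n₂) ^ 2 ≤ R₂ := fun h =>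
    sRel_quadratic n m₂ γ₂ M n₂ ν₂ hm₂ hγ₂ hγ₂' hMpos (by linarith) (by linarith) hν₂ h
  have hl₁ : M ≤ ν₁ → ν₁ ≤ R₁ := fun h =>
    hM₁ n₁ (by linarith) hn₁u ν₁ (le_trans (le_max_left _ _) h)
  have hl₂ : M ≤ ν₂ → ν₂ ≤ R₂ := fun h =>
    hM₂ n₂ (by linarith) hn₂u ν₂ (le_trans (le_max_right _ _) h)
  have hR₁0 : 0 ≤ R₁ := by
    rcases le_total ν₁ M with h | h
    · linarith only [hq₁ h, mul_nonneg hc₁.le (sq_nonneg (ν₁ - n₁))]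
    · linarith only [hl₁ h, hMpos, h]
  have hR₂0 : 0 ≤ R₂ := by
    rcases le_total ν₂ M with h | h
    · linarith only [hq₂ h, mul_nonneg hc₂.le (sq_nonneg (ν₂ - n₂))]
    · linarith only [hl₂ h, hMpos, h]
  have hS0 : 0 ≤ S := by simp only [hSdef]; linarith only [hR₁0, hR₂0]
  have hVS : 0 ≤ V * S := mul_nonneg hV.le hS0
  have hν₁₂ : 0 ≤ ν₁ + ν₂ := by linarith only [hν₁, hν₂]
  have hAb : A ^ 2 ≤ (ub * (ν₁ + ν₂)) ^ 2 := by
    apply sq_le_sq'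
    · simp only [hAdef]
      linarith only [mul_le_mul_of_nonneg_right hn₂u hν₁,
        mul_nonneg (le_trans hlb.le hn₁l) hν₂, mul_nonneg hub.le hν₂]
    · simp only [hAdef]
      linarith only [mul_le_mul_of_nonneg_right hn₁u hν₂,
        mul_nonneg (le_trans hlb.le hn₂l) hν₁, mul_nonneg hub.le hν₁]
  have hVm : mmin * (ν₁ + ν₂) ≤ V := by
    have h1 := mul_le_mul_of_nonneg_right (min_le_left m₁ m₂) hν₁
    have h2 := mul_le_mul_of_nonneg_right (min_le_right m₁ m₂) hν₂
    simp only [hVdef]; simp only [hmmindef] at h1 h2 ⊢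
    linarith only [h1, h2]
  have hsuff : ∀ T : ℝ, T ≤ C' → A ^ 2 ≤ T * (V * S) → A ^ 2 ≤ C' * (V * S) := by
    intro T hTC h
    linarith only [h, mul_le_mul_of_nonneg_right hTC hVS]
  -- case ν₂ large (used twice)
  have hA : A ^ 2 ≤ C' * (V * S) := by
    have hbig : (M < ν₁ ∨ M < ν₂) → ν₁ + ν₂ ≤ (M + 1) * S := by
      rintro (h1 | h2)
      · have r1 := hl₁ h1.le
        have hν₁S : ν₁ ≤ S := by simp only [hSdef]; linarith only [r1, hR₂0]
        rcases le_or_gt ν₂ M with h2' | h2'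
        · have e1 : M * 1 ≤ M * ν₁ :=
            mul_le_mul_of_nonneg_left (by linarith only [hM1, h1]) (by linarith only [hMpos])
          have e2 : M * ν₁ ≤ M * S :=
            mul_le_mul_of_nonneg_left hν₁S (by linarith only [hMpos])
          linarith only [e1, e2, h2', hν₁S]
        · have r2 := hl₂ h2'.le
          have e2 : 0 ≤ M * S := mul_nonneg hMpos.le hS0
          linarith only [r1, r2, e2, hSdef]
      · have r2 := hl₂ h2.le
        have hν₂S : ν₂ ≤ S := by simp only [hSdef]; linarith only [r2, hR₁0]
        rcases le_or_gt ν₁ M with h1' | h1'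
        · have e1 : M * 1 ≤ M * ν₂ :=
            mul_le_mul_of_nonneg_left (by linarith only [hM1, h2]) (by linarith only [hMpos])
          have e2 : M * ν₂ ≤ M * S :=
            mul_le_mul_of_nonneg_left hν₂S (by linarith only [hMpos])
          linarith only [e1, e2, h1', hν₂S]
        · have r1 := hl₁ h1'.le
          have e2 : 0 ≤ M * S := mul_nonneg hMpos.le hS0
          linarith only [r1, r2, e2, hSdef]
    rcases le_or_gt ν₁ M with h1 | h1
    · rcases le_or_gt ν₂ M with h2 | h2
      · -- both small: quadratic regime
        have q1 := hq₁ h1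
        have q2 := hq₂ h2
        have hcs : c * ((ν₁ - n₁) ^ 2 + (ν₂ - n₂) ^ 2) ≤ S := by
          have e1 : c * (ν₁ - n₁) ^ 2 ≤ c₁ * (ν₁ - n₁) ^ 2 :=
            mul_le_mul_of_nonneg_right (min_le_left _ _) (sq_nonneg _)
          have e2 : c * (ν₂ - n₂) ^ 2 ≤ c₂ * (ν₂ - n₂) ^ 2 :=
            mul_le_mul_of_nonneg_right (min_le_right _ _) (sq_nonneg _)
          simp only [hSdef]
          simp only [hcdef] at e1 e2 ⊢
          linarith only [e1, e2, q1, q2]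
        have hn₁sq : n₁ ^ 2 ≤ ub ^ 2 := by
          nlinarith only [mul_self_le_mul_self (le_trans hlb.le hn₁l) hn₁u]
        have hn₂sq : n₂ ^ 2 ≤ ub ^ 2 := by
          nlinarith only [mul_self_le_mul_self (le_trans hlb.le hn₂l) hn₂u]
        have hd : A ^ 2 ≤ 2 * ub ^ 2 * ((ν₁ - n₁) ^ 2 + (ν₂ - n₂) ^ 2) := by
          have hid : A = n₁ * (ν₂ - n₂) - n₂ * (ν₁ - n₁) := by simp only [hAdef]; ring
          rw [hid]
          nlinarith only [sq_nonneg (n₁ * (ν₂ - n₂) + n₂ * (ν₁ - n₁)),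
            mul_le_mul_of_nonneg_right hn₁sq (sq_nonneg (ν₂ - n₂)),
            mul_le_mul_of_nonneg_right hn₂sq (sq_nonneg (ν₁ - n₁))]
        rcases le_or_gt δ V with hδV | hδV
        · -- V not small
          apply hsuff T1 (by simp only [hC'def]; linarith only [hT2, hT3])
          rw [hT1def, div_mul_eq_mul_div, le_div_iff₀ (mul_pos hc hδ)]
          have i1 : A ^ 2 * c ≤ 2 * ub ^ 2 * S := by
            linarith only [mul_le_mul_of_nonneg_right hd hc.le,
              mul_le_mul_of_nonneg_left hcs (by linarith only [hub2] : (0:ℝ) ≤ 2 * ub ^ 2)]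
          have h2S : (0:ℝ) ≤ 2 * ub ^ 2 * S :=
            mul_nonneg (by linarith only [hub2]) hS0
          linarith only [mul_le_mul_of_nonneg_right i1 hδ.le,
            mul_le_mul_of_nonneg_left hδV h2S]
        · -- V small
          have hmm₁ : mmin * (lb / 2) ≤ m₁ * (lb / 2) :=
            mul_le_mul_of_nonneg_right (min_le_left m₁ m₂) (by linarith only [hlb])
          have hmm₂ : mmin * (lb / 2) ≤ m₂ * (lb / 2) :=
            mul_le_mul_of_nonneg_right (min_le_right m₁ m₂) (by linarith only [hlb])
          have hδV' : m₁ * ν₁ + m₂ * ν₂ < mmin * (lb / 2) := by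
            simp only [hVdef, hδdef] at hδV; linarith only [hδV]
          have hν₁s : ν₁ ≤ lb / 2 := by
            nlinarith only [hδV', hmm₁, mul_nonneg hm₂.le hν₂, hm₁]
          have hν₂s : ν₂ ≤ lb / 2 := by
            nlinarith only [hδV', hmm₂, mul_nonneg hm₁.le hν₁, hm₂]
          have hd1 : (lb / 2) ^ 2 ≤ (ν₁ - n₁) ^ 2 := by
            have hgap : lb / 2 ≤ n₁ - ν₁ := by linarith only [hν₁s, hn₁l]
            nlinarith only [mul_self_le_mul_self
              (by linarith only [hlb] : (0:ℝ) ≤ lb / 2) hgap]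
          have hSlb : c * (lb / 2) ^ 2 ≤ S := by
            have e1 : c * (lb / 2) ^ 2 ≤ c₁ * (ν₁ - n₁) ^ 2 :=
              mul_le_mul (min_le_left _ _) hd1 (sq_nonneg _) hc₁.le
            simp only [hSdef]
            linarith only [e1, q1, hR₂0]
          apply hsuff T2 (by simp only [hC'def]; linarith only [hT1, hT3])
          rw [hT2def, div_mul_eq_mul_div, le_div_iff₀ (mul_pos (mul_pos hmmin hc) hlb)]
          have i1 : A ^ 2 ≤ ub ^ 2 * lb * (ν₁ + ν₂) := by
            have hsl : ν₁ + ν₂ ≤ lb := by linarith only [hν₁s, hν₂s]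
            linarith only [hAb, mul_le_mul_of_nonneg_left hsl
              (mul_nonneg hub2.le hν₁₂ : (0:ℝ) ≤ ub ^ 2 * (ν₁ + ν₂))]
          have i2 : A ^ 2 * mmin ≤ ub ^ 2 * lb * V := by
            linarith only [mul_le_mul_of_nonneg_left hVm
              (mul_nonneg hub2.le hlb.le : (0:ℝ) ≤ ub ^ 2 * lb),
              mul_le_mul_of_nonneg_right i1 hmmin.le]
          have h4V : (0:ℝ) ≤ 4 * ub ^ 2 * V :=
            mul_nonneg (by linarith only [hub2]) hV.le
          have w1 : A ^ 2 * (mmin * c * lb) ≤ ub ^ 2 * lb * V * (c * lb) := by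
            have := mul_le_mul_of_nonneg_right i2
              (mul_nonneg hc.le hlb.le : (0:ℝ) ≤ c * lb)
            linarith only [this]
          have w2 : 4 * ub ^ 2 * V * (c * (lb / 2) ^ 2) ≤ 4 * ub ^ 2 * (V * S) := by
            have := mul_le_mul_of_nonneg_left hSlb h4V
            linarith only [this]
          have w3 : ub ^ 2 * lb * V * (c * lb) = 4 * ub ^ 2 * V * (c * (lb / 2) ^ 2) := by
            ring
          exact le_trans w1 (le_trans (le_of_eq w3) w2)
      · -- ν₂ large
        have hsum := hbig (Or.inr h2)
        apply hsuff T3 (by simp only [hC'def]; linarith only [hT1, hT2])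
        rw [hT3def, div_mul_eq_mul_div, le_div_iff₀ hmmin]
        have j2 : A ^ 2 * mmin ≤ ub ^ 2 * (ν₁ + ν₂) * V := by
          linarith only [mul_le_mul_of_nonneg_left hVm
            (mul_nonneg hub2.le hν₁₂ : (0:ℝ) ≤ ub ^ 2 * (ν₁ + ν₂)),
            mul_le_mul_of_nonneg_right hAb hmmin.le]
        have j3 : ub ^ 2 * (ν₁ + ν₂) * V ≤ ub ^ 2 * ((M + 1) * S) * V :=
          mul_le_mul_of_nonneg_right
            (mul_le_mul_of_nonneg_left hsum hub2.le) hV.le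
        linarith only [j2, j3]
    · -- ν₁ large
      have hsum := hbig (Or.inl h1)
      apply hsuff T3 (by simp only [hC'def]; linarith only [hT1, hT2])
      rw [hT3def, div_mul_eq_mul_div, le_div_iff₀ hmmin]
      have j2 : A ^ 2 * mmin ≤ ub ^ 2 * (ν₁ + ν₂) * V := by
        linarith only [mul_le_mul_of_nonneg_left hVm
          (mul_nonneg hub2.le hν₁₂ : (0:ℝ) ≤ ub ^ 2 * (ν₁ + ν₂)),
          mul_le_mul_of_nonneg_right hAb hmmin.le]
      have j3 : ub ^ 2 * (ν₁ + ν₂) * V ≤ ub ^ 2 * ((M + 1) * S) * V :=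
        mul_le_mul_of_nonneg_right
          (mul_le_mul_of_nonneg_left hsum hub2.le) hV.le
      linarith only [j2, j3]
  -- conclude
  have hmain : ∀ mj νj nj : ℝ, 0 < mj → mj ≤ mmax →
      (nj / U - νj / V = mj * A / (U * V) ∨ nj / U - νj / V = -(mj * A) / (U * V)) →
      (nj / U - νj / V) ^ 2 * V ≤ mmax ^ 2 * C' / ρl ^ 2 * S := by
    intro mj νj nj hmj hmjmax hid
    have he : (nj / U - νj / V) ^ 2 * V = mj ^ 2 * A ^ 2 / (U ^ 2 * V) := by
      rcases hid with hid | hid <;> rw [hid] <;>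
        · field_simp
    rw [he, div_le_iff₀ (mul_pos (pow_pos hU 2) hV), div_mul_eq_mul_div,
      div_mul_eq_mul_div, le_div_iff₀ (pow_pos hρl 2)]
    have k2 : mj ^ 2 ≤ mmax ^ 2 := by
      nlinarith only [mul_self_le_mul_self hmj.le hmjmax]
    have k3 : ρl ^ 2 ≤ U ^ 2 := by
      nlinarith only [mul_self_le_mul_self hρl.le hUl]
    have l1 : mj ^ 2 * A ^ 2 ≤ mmax ^ 2 * (C' * (V * S)) := by
      linarith only [mul_le_mul_of_nonneg_right k2 (sq_nonneg A),
        mul_le_mul_of_nonneg_left hA (sq_nonneg mmax)]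
    have hnn : (0:ℝ) ≤ mmax ^ 2 * (C' * (V * S)) :=
      mul_nonneg (sq_nonneg mmax) (mul_nonneg hC'.le hVS)
    linarith only [mul_le_mul_of_nonneg_right l1 (sq_nonneg ρl),
      mul_le_mul_of_nonneg_left k3 hnn]
  constructor
  · apply hmain m₂ ν₁ n₁ hm₂ (le_max_right _ _)
    left
    rw [div_sub_div _ _ hU.ne' hV.ne', hAdef, hUdef, hVdef]
    congr 1
    ring
  · apply hmain m₁ ν₂ n₂ hm₁ (le_max_left _ _)
    right
    rw [div_sub_div _ _ hU.ne' hV.ne', hAdef, hUdef, hVdef]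
    congr 1
    ring
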